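/- Let ε : ZMod l → {−1, 0, 1} be a cyclic sequence and for n ≥ 1 let a_n(ε) denote the number of free linear segments of level n of ε (counted up to the cyclic identification). Then for every m ≥ 1, a_{m+1}(ε) ≤ a_m(ε); that is, the number of free linear segments of level m+1 is at most the number of level m. -/
import Mathlib


/-- `(s, t)` is a free linear segment of level `n` of the cyclic sequence
`ε : ZMod l → ℤ` (indices taken modulo `l`). -/
def IsFreeSegment (l : ℕ) (ε : ZMod l → ℤ) (n : ℕ) (s t : ℤ) : Prop :=
  s ≤ t ∧ t < s + l ∧ ε (s : ZMod l) = -1 ∧ ε (t : ZMod l) = 1 ∧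
    (∑ i ∈ Finset.Icc s t, ε (i : ZMod l)) = 0 ∧
    (∀ j : ℤ, s ≤ j → j < t →
      -(n : ℤ) ≤ (∑ i ∈ Finset.Icc s j, ε (i : ZMod l)) ∧
        (∑ i ∈ Finset.Icc s j, ε (i : ZMod l)) < 0) ∧
    (∃ j₀ : ℤ, s ≤ j₀ ∧ j₀ < t ∧ (∑ i ∈ Finset.Icc s j₀, ε (i : ZMod l)) = -(n : ℤ))

/-- The number `a_n(ε)` of free linear segments of level `n` of the cyclic sequence
`ε`, counted up to the cyclic identification: each class has a unique representative
with starting index in `[0, l)`. -/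
noncomputable def segCount (l : ℕ) (ε : ZMod l → ℤ) (n : ℕ) : ℕ :=
  Nat.card {st : ℤ × ℤ // 0 ≤ st.1 ∧ st.1 < l ∧ IsFreeSegment l ε n st.1 st.2}

namespace SegAux
variable (l : ℕ) (ε : ZMod l → ℤ)

noncomputable def F (s j : ℤ) : ℤ := ∑ i ∈ Finset.Icc s j, ε (i : ZMod l)

lemma F_step (s j : ℤ) (h : s ≤ j + 1) :
    F l ε s (j + 1) = F l ε s j + ε ((j+1 : ℤ) : ZMod l) := by
  unfold F
  have hins : Finset.Icc s (j+1) = insert (j+1) (Finset.Icc s j) := by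
    ext x; simp only [Finset.mem_Icc, Finset.mem_insert]; omega
  rw [hins, Finset.sum_insert (by simp [Finset.mem_Icc])]
  ring

lemma F_split (s a j : ℤ) (h1 : s ≤ a) (h2 : a ≤ j) :
    F l ε s j = F l ε s a + F l ε (a+1) j := by
  unfold F
  rw [← Finset.sum_union (by simp [Finset.disjoint_left, Finset.mem_Icc]; omega)]
  congr 1
  ext x; simp only [Finset.mem_Icc, Finset.mem_union]; omega

lemma F_shift (s j k : ℤ) : F l ε (s + l*k) (j + l*k) = F l ε s j := by
  unfold F
  rw [Finset.sum_nbij' (i := fun x => x - l*k) (j := fun x => x + l*k)]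
  · intro x hx; simp only [Finset.mem_Icc] at hx ⊢; omega
  · intro x hx; simp only [Finset.mem_Icc] at hx ⊢; omega
  · intro x _; ring
  · intro x _; ring
  · intro x _
    congr 1
    push_cast
    simp [ZMod.natCast_self]

lemma F_self (s : ℤ) : F l ε s s = ε (s : ZMod l) := by simp [F]

lemma seg_shift {n : ℕ} {s t : ℤ} (k : ℤ) (h : IsFreeSegment l ε n s t) :
    IsFreeSegment l ε n (s + l*k) (t + l*k) := by
  obtain ⟨h1, h2, h3, h4, h5, h6, j₀, hj1, hj2, hj3⟩ := h
  have cast_eq : ∀ x : ℤ, ((x + l*k : ℤ) : ZMod l) = (x : ZMod l) := by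
    intro x; push_cast; simp [ZMod.natCast_self]
  refine ⟨by omega, by omega, by rw [cast_eq]; exact h3, by rw [cast_eq]; exact h4,
    ?_, ?_, j₀ + l*k, by omega, by omega, ?_⟩
  · show F l ε _ _ = 0
    rw [F_shift]; exact h5
  · intro j hj hj'
    have hF : F l ε (s + l*k) j = F l ε s (j - l*k) := by
      have := F_shift l ε s (j - l*k) k; simpa using this
    show -(n:ℤ) ≤ F l ε _ _ ∧ F l ε _ _ < 0
    rw [hF]; exact h6 _ (by omega) (by omega)
  · show F l ε _ _ = -(n:ℤ)
    rw [F_shift]; exact hj3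

lemma lemA {n : ℕ} {s₁ t₁ : ℤ} (h : IsFreeSegment l ε n s₁ t₁)
    {s₂ c : ℤ} (hs : s₁ < s₂) (hc1 : s₂ ≤ c) (hc2 : c < t₁)
    (heq : F l ε s₁ c = F l ε s₂ c) : False := by
  obtain ⟨h1, h2, h3, h4, h5, h6, _⟩ := h
  have hsplit := F_split l ε s₁ (s₂ - 1) c (by omega) (by omega)
  simp only [sub_add_cancel] at hsplit
  have h6'' : F l ε s₁ (s₂ - 1) < 0 := (h6 (s₂ - 1) (by omega) (by omega)).2
  omega

lemma trim {m : ℕ} (hm : 1 ≤ m) (hε : ∀ i, ε i = -1 ∨ ε i = 0 ∨ ε i = 1)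
    {s t : ℤ} (h : IsFreeSegment l ε (m+1) s t) :
    ∃ ab : ℤ × ℤ, s ≤ ab.1 ∧ ab.1 < t ∧ F l ε s ab.1 = -1 ∧ ab.2 ≤ t ∧
      IsFreeSegment l ε m (ab.1+1) ab.2 := by
  obtain ⟨h1, h2, h3, h4, h5, h6, j₀, hj1, hj2, hj3⟩ := h
  push_cast at hj3
  replace hj3 : F l ε s j₀ = -((m:ℤ)+1) := hj3
  replace h6 : ∀ j : ℤ, s ≤ j → j < t → -((m:ℤ)+1) ≤ F l ε s j ∧ F l ε s j < 0 := by
    intro j hj hj'; have := h6 j hj hj'; push_cast at this; exact this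
  replace h5 : F l ε s t = 0 := h5
  -- the set A and its max a
  set A := (Finset.Icc s j₀).filter (fun j => F l ε s j = -1) with hA
  have hsA : s ∈ A := by
    simp only [hA, Finset.mem_filter, Finset.mem_Icc]
    exact ⟨⟨le_refl s, hj1⟩, by rw [F_self]; exact h3⟩
  set a := A.max' ⟨s, hsA⟩ with ha
  have haA : a ∈ A := A.max'_mem _
  have haIcc : s ≤ a ∧ a ≤ j₀ := Finset.mem_Icc.1 (Finset.mem_filter.1 haA).1
  have haF : F l ε s a = -1 := (Finset.mem_filter.1 haA).2
  have haj₀ : a < j₀ := by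
    rcases eq_or_lt_of_le haIcc.2 with heq | hlt
    · rw [heq] at haF; omega
    · exact hlt
  -- F s (t-1) = -1
  have hFt1 : F l ε s (t-1) = -1 := by
    have hstep := F_step l ε s (t-1) (by omega)
    rw [show t - 1 + 1 = t by ring] at hstep
    rw [h4] at hstep
    omega
  -- the set B and its min b
  set B := (Finset.Icc j₀ (t-1)).filter (fun j => F l ε s j = -1) with hB
  have htB : t - 1 ∈ B := by
    simp only [hB, Finset.mem_filter, Finset.mem_Icc]
    exact ⟨⟨by omega, le_refl _⟩, hFt1⟩
  set b := B.min' ⟨t-1, htB⟩ with hb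
  have hbB : b ∈ B := B.min'_mem _
  have hbIcc : j₀ ≤ b ∧ b ≤ t - 1 := Finset.mem_Icc.1 (Finset.mem_filter.1 hbB).1
  have hbF : F l ε s b = -1 := (Finset.mem_filter.1 hbB).2
  have hj₀b : j₀ < b := by
    rcases eq_or_lt_of_le hbIcc.1 with heq | hlt
    · rw [← heq] at hbF; omega
    · exact hlt
  -- key bound
  have key : ∀ j : ℤ, a < j → j < b → F l ε s j ≤ -2 := by
    intro j hja hjb
    have hneg := (h6 j (by omega) (by omega)).2
    have hne : F l ε s j ≠ -1 := by
      intro hF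
      by_cases hcase : j ≤ j₀
      · have hjA : j ∈ A := by
          simp only [hA, Finset.mem_filter, Finset.mem_Icc]
          exact ⟨⟨by omega, hcase⟩, hF⟩
        have := A.le_max' j hjA
        omega
      · have hjB : j ∈ B := by
          simp only [hB, Finset.mem_filter, Finset.mem_Icc]
          exact ⟨⟨by omega, by omega⟩, hF⟩
        have := B.min'_le j hjB
        omega
    omega
  -- ε (a+1) = -1
  have hεa : ε ((a+1 : ℤ) : ZMod l) = -1 := by
    have hstep := F_step l ε s a (by omega)
    have h2a : F l ε s (a+1) ≤ -2 := key (a+1) (by omega) (by omega)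
    rcases hε ((a+1 : ℤ) : ZMod l) with hc | hc | hc <;> omega
  -- ε b = 1
  have hεb : ε ((b : ℤ) : ZMod l) = 1 := by
    have hstep := F_step l ε s (b-1) (by omega)
    rw [show b - 1 + 1 = b by ring] at hstep
    have h2b : F l ε s (b-1) ≤ -2 := key (b-1) (by omega) (by omega)
    rcases hε ((b : ℤ) : ZMod l) with hc | hc | hc <;> omega
  -- new segment sums
  have hnew : ∀ j : ℤ, a ≤ j → F l ε (a+1) j = F l ε s j + 1 := by
    intro j hj
    have := F_split l ε s a j haIcc.1 hj
    omega
  refine ⟨(a, b), haIcc.1, by omega, haF, by omega, by omega, by push_cast; omega,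
    hεa, hεb, ?_, ?_, j₀, by omega, hj₀b, ?_⟩
  · show F l ε (a+1) b = 0
    rw [hnew b (by omega)]; omega
  · intro j hj hj'
    have hk := key j (by omega) (by omega)
    have hlow := (h6 j (by omega) (by omega)).1
    show -(m:ℤ) ≤ F l ε (a+1) j ∧ F l ε (a+1) j < 0
    rw [hnew j (by omega)]
    omega
  · show F l ε (a+1) j₀ = -(m:ℤ)
    rw [hnew j₀ (by omega)]
    omega

end SegAux

/-- For every `m ≥ 1`, the number of free linear segments of level `m + 1` of a cyclic
`{-1,0,1}`-valued sequence is at most the number of free linear segments of level `m`: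
`a_{m+1}(ε) ≤ a_m(ε)`. -/


theorem segCount_succ_le (l : ℕ) (hl : 1 ≤ l) (ε : ZMod l → ℤ)
    (hε : ∀ i, ε i = -1 ∨ ε i = 0 ∨ ε i = 1) (m : ℕ) (hm : 1 ≤ m) :
    segCount l ε (m + 1) ≤ segCount l ε m := by
  classical
  have hlz : (0:ℤ) < l := by exact_mod_cast hl
  haveI hfin : Finite {st : ℤ × ℤ // 0 ≤ st.1 ∧ st.1 < l ∧ IsFreeSegment l ε m st.1 st.2} := by
    have hsub : {st : ℤ × ℤ | 0 ≤ st.1 ∧ st.1 < l ∧ IsFreeSegment l ε m st.1 st.2} ⊆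
        Set.Icc (0:ℤ) l ×ˢ Set.Icc (0:ℤ) (2*l) := by
      rintro ⟨s, t⟩ ⟨h0, h1, hst, htl, _⟩
      exact ⟨⟨h0, h1.le⟩, by constructor <;> simp <;> omega⟩
    exact (((Set.finite_Icc _ _).prod (Set.finite_Icc _ _)).subset hsub).to_subtype
  have hmap : ∀ x : {st : ℤ × ℤ // 0 ≤ st.1 ∧ st.1 < l ∧ IsFreeSegment l ε (m+1) st.1 st.2},
      ∃ y : {st : ℤ × ℤ // 0 ≤ st.1 ∧ st.1 < l ∧ IsFreeSegment l ε m st.1 st.2},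
      ∃ a k : ℤ, x.1.1 ≤ a ∧ a < x.1.2 ∧ SegAux.F l ε x.1.1 a = -1 ∧
        0 ≤ k ∧ k ≤ 1 ∧ y.1.1 = a + 1 - l * k := by
    rintro ⟨⟨s, t⟩, hs0, hsl, hseg⟩
    obtain ⟨⟨a, b⟩, ha1, ha2, haF, hbt, hsegm⟩ := SegAux.trim l ε hm hε hseg
    simp only at ha1 ha2 haF hbt hsegm ⊢
    have hst : s ≤ t := hseg.1
    have htl : t < s + l := hseg.2.1
    set k := (a + 1) / (l:ℤ) with hk
    have hk0 : 0 ≤ k := Int.ediv_nonneg (by omega) (by omega)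
    have hk1 : k ≤ 1 := by
      have ha' := Int.ediv_le_ediv hlz (show a+1 ≤ 2*(l:ℤ)-1 by omega)
      have hb' : (2*(l:ℤ)-1)/(l:ℤ) = 1 := by
        rw [show 2*(l:ℤ)-1 = l-1 + l*1 by ring, Int.add_mul_ediv_left _ _ (by omega),
          Int.ediv_eq_zero_of_lt (by omega) (by omega)]
        norm_num
      omega
    have hmod : a + 1 - l * k = (a+1) % l := by rw [hk, Int.emod_def]
    have hm0 : 0 ≤ a + 1 - l * k := by rw [hmod]; exact Int.emod_nonneg _ (by omega)
    have hm1 : a + 1 - l * k < l := by rw [hmod]; exact Int.emod_lt_of_pos _ hlz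
    have hshift := SegAux.seg_shift l ε (-k) hsegm
    rw [show a + 1 + (l:ℤ) * (-k) = a + 1 - l * k by ring,
        show b + (l:ℤ) * (-k) = b - l * k by ring] at hshift
    exact ⟨⟨(a + 1 - l * k, b - l * k), hm0, hm1, hshift⟩, a, k, ha1, ha2, haF, hk0, hk1, rfl⟩
  rw [segCount, segCount]
  refine Nat.card_le_card_of_injective (fun x => (hmap x).choose) ?_
  rintro ⟨⟨s₁, t₁⟩, hs₁0, hs₁l, hseg₁⟩ ⟨⟨s₂, t₂⟩, hs₂0, hs₂l, hseg₂⟩ heq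
  have heq' : (hmap ⟨⟨s₁, t₁⟩, hs₁0, hs₁l, hseg₁⟩).choose
      = (hmap ⟨⟨s₂, t₂⟩, hs₂0, hs₂l, hseg₂⟩).choose := heq
  obtain ⟨a₁, k₁, hx1a, hx1t, hF₁, hk₁0, hk₁1, hy₁⟩ :=
    (hmap ⟨⟨s₁, t₁⟩, hs₁0, hs₁l, hseg₁⟩).choose_spec
  obtain ⟨a₂, k₂, hx2a, hx2t, hF₂, hk₂0, hk₂1, hy₂⟩ :=
    (hmap ⟨⟨s₂, t₂⟩, hs₂0, hs₂l, hseg₂⟩).choose_spec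
  dsimp only at hx1a hx1t hF₁ hy₁ hx2a hx2t hF₂ hy₂ hs₁0 hs₁l hseg₁ hs₂0 hs₂l hseg₂
  rw [heq'] at hy₁
  have hk₁' : k₁ = 0 ∨ k₁ = 1 := by omega
  have hk₂' : k₂ = 0 ∨ k₂ = 1 := by omega
  have hcase : a₁ = a₂ ∨ a₂ = a₁ + l ∨ a₁ = a₂ + l := by
    rcases hk₁' with rfl | rfl <;> rcases hk₂' with rfl | rfl <;> omega
  rcases hcase with hA | hA | hA
  · -- same cut point
    rcases lt_trichotomy s₁ s₂ with hss | hss | hss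
    · rw [← hA] at hF₂
      exact (SegAux.lemA l ε hseg₁ hss (by omega) hx1t (by omega)).elim
    · rcases lt_trichotomy t₁ t₂ with htt | htt | htt
      · have h5₁ : SegAux.F l ε s₁ t₁ = 0 := hseg₁.2.2.2.2.1
        have h6₂ : -((m:ℤ)+1) ≤ SegAux.F l ε s₂ t₁ ∧ SegAux.F l ε s₂ t₁ < 0 := by
          have := hseg₂.2.2.2.2.2.1 t₁ (by omega) htt
          push_cast at this; exact this
        rw [hss] at h5₁
        omega
      · subst hss; subst htt; rfl
      · have h5₂ : SegAux.F l ε s₂ t₂ = 0 := hseg₂.2.2.2.2.1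
        have h6₁ : -((m:ℤ)+1) ≤ SegAux.F l ε s₁ t₂ ∧ SegAux.F l ε s₁ t₂ < 0 := by
          have := hseg₁.2.2.2.2.2.1 t₂ (by omega) htt
          push_cast at this; exact this
        rw [← hss] at h5₂
        omega
    · rw [hA] at hF₁
      exact (SegAux.lemA l ε hseg₂ hss (by omega) hx2t (by omega)).elim
  · -- a₂ = a₁ + l : shift segment 2 down by l
    have hshift := SegAux.seg_shift l ε (-1) hseg₂
    rw [show s₂ + (l:ℤ) * (-1) = s₂ - l by ring,
        show t₂ + (l:ℤ) * (-1) = t₂ - l by ring] at hshift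
    have hFs := SegAux.F_shift l ε (s₂ - l) (a₂ - l) 1
    rw [show s₂ - (l:ℤ) + (l:ℤ) * 1 = s₂ by ring,
        show a₂ - (l:ℤ) + (l:ℤ) * 1 = a₂ by ring] at hFs
    rw [show a₂ - (l:ℤ) = a₁ by omega] at hFs
    exact (SegAux.lemA l ε hshift (show s₂ - (l:ℤ) < s₁ by omega) hx1a
      (show a₁ < t₂ - (l:ℤ) by omega) (by omega)).elim
  · -- a₁ = a₂ + l : shift segment 1 down by l
    have hshift := SegAux.seg_shift l ε (-1) hseg₁
    rw [show s₁ + (l:ℤ) * (-1) = s₁ - l by ring,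
        show t₁ + (l:ℤ) * (-1) = t₁ - l by ring] at hshift
    have hFs := SegAux.F_shift l ε (s₁ - l) (a₁ - l) 1
    rw [show s₁ - (l:ℤ) + (l:ℤ) * 1 = s₁ by ring,
        show a₁ - (l:ℤ) + (l:ℤ) * 1 = a₁ by ring] at hFs
    rw [show a₁ - (l:ℤ) = a₂ by omega] at hFs
    exact (SegAux.lemA l ε hshift (show s₁ - (l:ℤ) < s₂ by omega) hx2a
      (show a₂ < t₁ - (l:ℤ) by omega) (by omega)).elim
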